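/- There exists an expansive and primitive 1-dimensional substitution μ over a 3-letter alphabet {a,b,c}, namely μ : a ↦ ca, b ↦ bc, c ↦ cbac, and a factorial language L strictly containing L_μ such that L equals the factorial closure of μ(L). Concretely, taking L to be the set of factors of μ^n(ab) for n ∈ ℕ, one has L = factorial closure of μ(L), ab ∈ L, and ab ∉ L_μ, hence L ⊋ L_μ. -/

import Mathlib

/-- The three-letter alphabet `{a,b,c}`. -/
inductive T3 : Type
  | a | b | c
deriving DecidableEq

open T3

/-- The substitution `μ : a ↦ ca, b ↦ bc, c ↦ cbac`. -/
def mu : T3 → List T3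
  | a => [c, a]
  | b => [b, c]
  | c => [c, b, a, c]

/-- The extension of `μ` to words. -/
def muw (l : List T3) : List T3 := l.flatMap mu

/-- The language `L_μ`: all factors of `μⁿ(x)` for letters `x` and `n ∈ ℕ`. -/
def Lmu : Set (List T3) := {u | ∃ (x : T3) (n : ℕ), u <:+: (muw^[n]) [x]}

/-- The language `L`: all factors of `μⁿ(ab)` for `n ∈ ℕ`. -/
def Lab : Set (List T3) := {u | ∃ n : ℕ, u <:+: (muw^[n]) [a, b]}

lemma muw_append (l m : List T3) : muw (l ++ m) = muw l ++ muw m := by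
  simp [muw]

lemma muw_cons (x : T3) (l : List T3) : muw (x :: l) = mu x ++ muw l := by
  simp [muw]

lemma muw_infix {u v : List T3} (h : u <:+: v) : muw u <:+: muw v := by
  obtain ⟨s, t, rfl⟩ := h
  exact ⟨muw s, muw t, by simp [muw_append]⟩

lemma muw_iter_infix (n : ℕ) {u v : List T3} (h : u <:+: v) :
    (muw^[n]) u <:+: (muw^[n]) v := by
  induction n generalizing u v with
  | zero => simpa using h
  | succ n ih => simpa [Function.iterate_succ_apply] using ih (muw_infix h)

lemma muw_head_b {w : List T3} (h : [b] <+: muw w) : ∃ w', w = b :: w' := by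
  cases w with
  | nil => simp [muw] at h
  | cons x w' =>
    cases x with
    | a => simp [muw_cons, mu, List.cons_prefix_cons] at h
    | b => exact ⟨w', rfl⟩
    | c => simp [muw_cons, mu, List.cons_prefix_cons] at h

lemma ab_infix_muw {w : List T3} (h : [a, b] <:+: muw w) : [a, b] <:+: w := by
  induction w with
  | nil => simp [muw] at h
  | cons x w ih =>
    cases x with
    | a =>
      have h' : [a, b] <:+: c :: a :: muw w := by simpa [muw_cons, mu] using h
      rcases List.infix_cons_iff.1 h' with hp | h2
      · simp [List.cons_prefix_cons] at hp
      rcases List.infix_cons_iff.1 h2 with hp | h3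
      · rw [List.cons_prefix_cons] at hp
        obtain ⟨w', rfl⟩ := muw_head_b hp.2
        exact ⟨[], w', rfl⟩
      · exact List.infix_cons (ih h3)
    | b =>
      have h' : [a, b] <:+: b :: c :: muw w := by simpa [muw_cons, mu] using h
      rcases List.infix_cons_iff.1 h' with hp | h2
      · simp [List.cons_prefix_cons] at hp
      rcases List.infix_cons_iff.1 h2 with hp | h3
      · simp [List.cons_prefix_cons] at hp
      · exact List.infix_cons (ih h3)
    | c =>
      have h' : [a, b] <:+: c :: b :: a :: c :: muw w := by simpa [muw_cons, mu] using h
      rcases List.infix_cons_iff.1 h' with hp | h2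
      · simp [List.cons_prefix_cons] at hp
      rcases List.infix_cons_iff.1 h2 with hp | h3
      · simp [List.cons_prefix_cons] at hp
      rcases List.infix_cons_iff.1 h3 with hp | h4
      · rw [List.cons_prefix_cons] at hp
        simp [List.cons_prefix_cons] at hp
      rcases List.infix_cons_iff.1 h4 with hp | h5
      · simp [List.cons_prefix_cons] at hp
      · exact List.infix_cons (ih h5)

lemma muw_len (l : List T3) : 2 * l.length ≤ (muw l).length := by
  induction l with
  | nil => simp [muw]
  | cons x l ih =>
    have hx : 2 ≤ (mu x).length := by cases x <;> simp [mu]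
    rw [muw_cons, List.length_append, List.length_cons]
    omega

lemma iter_len (m : ℕ) (x : T3) : 2 ^ m ≤ ((muw^[m]) [x]).length := by
  induction m with
  | zero => simp
  | succ m ih =>
    rw [Function.iterate_succ_apply']
    calc 2 ^ (m + 1) = 2 * 2 ^ m := by ring
    _ ≤ 2 * ((muw^[m]) [x]).length := by omega
    _ ≤ _ := muw_len _

lemma ab_not_infix_iter (n : ℕ) (x : T3) : ¬ [a, b] <:+: (muw^[n]) [x] := by
  induction n with
  | zero =>
    intro h
    have := h.length_le
    simp at this
  | succ n ih =>
    intro h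
    rw [Function.iterate_succ_apply'] at h
    exact ih (ab_infix_muw h)

/-- The substitution `μ : a ↦ ca, b ↦ bc, c ↦ cbac` is expansive and primitive,
and the factorial language `L` of factors of the words `μⁿ(ab)` satisfies
`L = factorial closure of μ(L)`, contains `ab`, while `ab ∉ L_μ`;
hence `L` strictly contains `L_μ`. -/
theorem exists_strict_superset_language :
    (∀ K : ℕ, ∃ m : ℕ, ∀ x : T3, K < ((muw^[m]) [x]).length) ∧
    (∃ m : ℕ, ∀ x y : T3, [y] <:+: (muw^[m]) [x]) ∧
    (Lab = {u | ∃ v ∈ Lab, u <:+: muw v}) ∧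
    [a, b] ∈ Lab ∧ [a, b] ∉ Lmu ∧ Lmu ⊂ Lab := by
  have hab_mem : [a, b] ∈ Lab := ⟨0, List.infix_refl _⟩
  have hab_not : [a, b] ∉ Lmu := by
    rintro ⟨x, n, h⟩
    exact ab_not_infix_iter n x h
  have hsub : Lmu ⊆ Lab := by
    rintro u ⟨x, n, h⟩
    have hx : ∃ k, [x] <:+: (muw^[k]) [a, b] := by
      cases x with
      | a => exact ⟨0, by decide⟩
      | b => exact ⟨0, by decide⟩
      | c => exact ⟨1, by decide⟩
    obtain ⟨k, hk⟩ := hx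
    refine ⟨n + k, h.trans ?_⟩
    rw [Function.iterate_add_apply]
    exact muw_iter_infix n hk
  refine ⟨?_, ⟨2, ?_⟩, ?_, hab_mem, hab_not, ?_⟩
  · intro K
    refine ⟨K, fun x => lt_of_lt_of_le (Nat.lt_two_pow_self (n := K)) (iter_len K x)⟩
  · intro x y
    cases x <;> cases y <;> decide
  · ext u
    constructor
    · rintro ⟨n, hu⟩
      refine ⟨(muw^[n]) [a, b], ⟨n, List.infix_refl _⟩, hu.trans ?_⟩
      have h1 : [a, b] <:+: muw [a, b] := by decide
      have := muw_iter_infix n h1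
      rwa [← Function.iterate_succ_apply, Function.iterate_succ_apply'] at this
    · rintro ⟨v, ⟨n, hv⟩, huv⟩
      refine ⟨n + 1, huv.trans ?_⟩
      rw [Function.iterate_succ_apply']
      exact muw_infix hv
  · rw [Set.ssubset_def]
    exact ⟨hsub, fun h => hab_not (h hab_mem)⟩
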